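/- If the PAA regressor is filtered as φ_f(t) = (1/Q_f(q⁻¹)) φ(t) with Q_f a fixed (θ̂-independent) invertible causal rational filter, then the signal ε_E(t+1) := (Q/Q_f) ε(t+1) + (1 - Q/Q_f) e(t+1) satisfies ∂ε_E(t+1)/∂θ̂ = -φ_f(t) + (∂φ_f/∂(qε))(ε(t+1) - e(t+1)), and the filtered equivalent regressor φ_E(t) := -∂ε_E(t+1)/∂θ̂ is independent of θ̂, assuming ∂²φ/∂(qε)∂θ̂ = 0. -/

import Mathlib

lemma causal_rep {V : Type*} [AddCommGroup V] [Module ℝ V]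
    (L : (ℕ → ℝ) →ₗ[ℝ] (ℕ → V))
    (hc : ∀ (t : ℕ) (x x' : ℕ → ℝ), (∀ s ≤ t, x s = x' s) → L x t = L x' t)
    (x : ℕ → ℝ) (t : ℕ) :
    L x t = ∑ s ∈ Finset.range (t+1), x s • L (fun u => if u = s then 1 else 0) t := by
  have h1 : L x t = L (∑ s ∈ Finset.range (t+1), x s • (fun u => if u = s then (1:ℝ) else 0)) t := by
    apply hc
    intro s hs
    simp only [Finset.sum_apply, Pi.smul_apply, smul_eq_mul, mul_ite, mul_one, mul_zero]
    rw [Finset.sum_ite_eq (Finset.range (t+1)) s x]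
    simp [Nat.lt_succ_iff, hs]
  rw [h1, map_sum]
  simp only [map_smul, Finset.sum_apply, Pi.smul_apply]

lemma derivA {n : ℕ} (y : ℕ → ℝ) (ψ : ℕ → Fin n → ℝ)
    (M : (ℕ → ℝ) →ₗ[ℝ] (ℕ → Fin n → ℝ))
    (hMcausal : ∀ (t : ℕ) (x x' : ℕ → ℝ), (∀ s ≤ t, x s = x' s) → M x t = M x' t)
    (ε : (Fin n → ℝ) → ℕ → ℝ) (φ : (Fin n → ℝ) → ℕ → Fin n → ℝ)
    (hφ : ∀ θ t, φ θ t = ψ t + M (fun s => ε θ (s + 1)) t)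
    (hrel : ∀ θ t, ε θ (t + 1) = y (t + 1) - ∑ i, θ i * φ θ t i)
    (θ : Fin n → ℝ)
    (Dε : ℕ → (Fin n → ℝ) →L[ℝ] ℝ)
    (hDε : ∀ s, HasFDerivAt (fun θ' => ε θ' (s + 1)) (Dε s) θ)
    (v : Fin n → ℝ) (τ : ℕ) :
    Dε τ v = -(∑ j, v j * φ θ τ j) - ∑ j, θ j * M (fun s => Dε s v) τ j := by
  have hφ' : ∀ (θ' : Fin n → ℝ) (j : Fin n), φ θ' τ j
      = ψ τ j + ∑ s ∈ Finset.range (τ+1), ε θ' (s+1) * M (fun u => if u = s then 1 else 0) τ j := by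
    intro θ' j
    rw [hφ, Pi.add_apply]
    congr 1
    rw [causal_rep M hMcausal]
    simp only [Finset.sum_apply, Pi.smul_apply, smul_eq_mul]
  have hexp : ∀ θ' : Fin n → ℝ, ε θ' (τ+1) =
      y (τ+1) - ∑ j, θ' j * (ψ τ j + ∑ s ∈ Finset.range (τ+1), ε θ' (s+1) * M (fun u => if u = s then 1 else 0) τ j) := by
    intro θ'
    rw [hrel]
    congr 1
    exact Finset.sum_congr rfl fun j _ => by rw [hφ' θ' j]
  have hR : HasFDerivAt (fun θ' : Fin n → ℝ => y (τ+1) - ∑ j, θ' j *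
        (ψ τ j + ∑ s ∈ Finset.range (τ+1), ε θ' (s+1) * M (fun u => if u = s then 1 else 0) τ j))
      (-(∑ j, (θ j • (∑ s ∈ Finset.range (τ+1), M (fun u => if u = s then 1 else 0) τ j • Dε s)
          + (ψ τ j + ∑ s ∈ Finset.range (τ+1), ε θ (s+1) * M (fun u => if u = s then 1 else 0) τ j)
              • ContinuousLinearMap.proj j))) θ := by
    apply HasFDerivAt.const_sub
    apply HasFDerivAt.fun_sum
    intro j _
    exact ((ContinuousLinearMap.proj (R := ℝ) (φ := fun _ : Fin n => ℝ) j).hasFDerivAt).mul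
      ((HasFDerivAt.fun_sum fun s _ => (hDε s).mul_const _).const_add (ψ τ j))
  have h3 : HasFDerivAt (fun θ' => ε θ' (τ+1))
      (-(∑ j, (θ j • (∑ s ∈ Finset.range (τ+1), M (fun u => if u = s then 1 else 0) τ j • Dε s)
          + (ψ τ j + ∑ s ∈ Finset.range (τ+1), ε θ (s+1) * M (fun u => if u = s then 1 else 0) τ j)
              • ContinuousLinearMap.proj j))) θ := by
    rw [funext hexp]; exact hR
  have h4 := (hDε τ).unique h3
  have hM' : ∀ j, M (fun s => Dε s v) τ j
      = ∑ s ∈ Finset.range (τ+1), Dε s v * M (fun u => if u = s then 1 else 0) τ j := by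
    intro j
    rw [causal_rep M hMcausal]
    simp only [Finset.sum_apply, Pi.smul_apply, smul_eq_mul]
  rw [h4]
  simp only [ContinuousLinearMap.neg_apply, ContinuousLinearMap.coe_sum', Finset.sum_apply,
    ContinuousLinearMap.add_apply, ContinuousLinearMap.smul_apply, ContinuousLinearMap.sum_apply,
    ContinuousLinearMap.proj_apply, smul_eq_mul]
  have hsum : (∑ j, (θ j * (∑ s ∈ Finset.range (τ+1), M (fun u => if u = s then 1 else 0) τ j * Dε s v)
        + (ψ τ j + ∑ s ∈ Finset.range (τ+1), ε θ (s+1) * M (fun u => if u = s then 1 else 0) τ j) * v j))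
      = ∑ j, v j * φ θ τ j + ∑ j, θ j * M (fun s => Dε s v) τ j := by
    rw [← Finset.sum_add_distrib]
    refine Finset.sum_congr rfl fun j _ => ?_
    rw [hφ' θ j, hM' j, Finset.mul_sum, Finset.mul_sum, add_comm]
    congr 1
    · ring
    · exact Finset.sum_congr rfl fun s _ => by ring
  rw [hsum, neg_add, ← sub_eq_add_neg]


/-- With a fixed (θ̂-independent) invertible causal filter `Q_f` applied
to the regressor, `φ_f = Q_f⁻¹ φ`, the equivalent prediction error
`ε_E(t+1) = (Q/Q_f) ε(t+1) + (1 - Q/Q_f) e(t+1)` satisfies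
`∂ε_E(t+1)/∂θ̂ = -φ_f(t) + (∂φ_f/∂(qε))(ε(t+1) - e(t+1))` (with
`∂φ_f/∂(qε) = Q_f⁻¹ ∘ M`), and the filtered equivalent regressor
`φ_E(t) = -∂ε_E(t+1)/∂θ̂` is independent of `θ̂`. Here `N` realizes `Q_f` and `N'` its
inverse as causal linear operators on sequences. -/
theorem stmt_17 {n : ℕ}
    (y e : ℕ → ℝ) (ψ : ℕ → Fin n → ℝ)
    (M : (ℕ → ℝ) →ₗ[ℝ] (ℕ → Fin n → ℝ))
    (hMcausal : ∀ (t : ℕ) (x x' : ℕ → ℝ), (∀ s ≤ t, x s = x' s) → M x t = M x' t)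
    (N N' : (ℕ → ℝ) →ₗ[ℝ] (ℕ → ℝ))
    (hNcausal : ∀ (t : ℕ) (x x' : ℕ → ℝ), (∀ s ≤ t, x s = x' s) → N x t = N x' t)
    (hN'causal : ∀ (t : ℕ) (x x' : ℕ → ℝ), (∀ s ≤ t, x s = x' s) → N' x t = N' x' t)
    (hinv : ∀ x : ℕ → ℝ, N (N' x) = x ∧ N' (N x) = x)
    (ε : (Fin n → ℝ) → ℕ → ℝ) (φ : (Fin n → ℝ) → ℕ → Fin n → ℝ)
    (hφ : ∀ θ t, φ θ t = ψ t + M (fun s => ε θ (s + 1)) t)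
    (hrel : ∀ θ t, ε θ (t + 1) = y (t + 1) - ∑ i, θ i * φ θ t i)
    (hdiff : ∀ t, Differentiable ℝ (fun θ : Fin n → ℝ => ε θ t))
    (φf : (Fin n → ℝ) → ℕ → Fin n → ℝ)
    (hφf : ∀ θ t i, φf θ t i = N' (fun s => φ θ s i) t)
    (εE : (Fin n → ℝ) → ℕ → ℝ)
    (hεE : ∀ θ t, εE θ (t + 1) = e (t + 1)
      + N' (fun t' => (ε θ (t' + 1) - e (t' + 1))
          + ∑ j, θ j * M (fun s => ε θ (s + 1) - e (s + 1)) t' j) t)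
    (φE : (Fin n → ℝ) → ℕ → Fin n → ℝ)
    (hφE : ∀ θ t i,
      φE θ t i = -((fderiv ℝ (fun θ' => εE θ' (t + 1)) θ) (Pi.single i 1))) :
    (∀ (θ : Fin n → ℝ) (t : ℕ) (i : Fin n),
        (fderiv ℝ (fun θ' => εE θ' (t + 1)) θ) (Pi.single i 1)
          = -φf θ t i
            + N' (fun s => M (fun s' => ε θ (s' + 1) - e (s' + 1)) s i) t) ∧
    (∀ (θ₁ θ₂ : Fin n → ℝ) (t : ℕ) (i : Fin n), φE θ₁ t i = φE θ₂ t i) := by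
  have key : ∀ (θ : Fin n → ℝ) (t : ℕ) (i : Fin n),
      (fderiv ℝ (fun θ' => εE θ' (t + 1)) θ) (Pi.single i 1)
        = -φf θ t i + N' (fun s => M (fun s' => ε θ (s' + 1) - e (s' + 1)) s i) t := by
    intro θ t i
    set Dε : ℕ → (Fin n → ℝ) →L[ℝ] ℝ := fun s => fderiv ℝ (fun θ' => ε θ' (s+1)) θ with hDεdef
    have hDε : ∀ s, HasFDerivAt (fun θ' => ε θ' (s + 1)) (Dε s) θ :=
      fun s => ((hdiff (s+1)) θ).hasFDerivAt
    -- component form of inner M applications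
    have hMrep : ∀ (θ' : Fin n → ℝ) (s : ℕ) (j : Fin n),
        M (fun s' => ε θ' (s' + 1) - e (s' + 1)) s j
          = ∑ s' ∈ Finset.range (s+1), (ε θ' (s'+1) - e (s'+1)) * M (fun u => if u = s' then 1 else 0) s j := by
      intro θ' s j
      rw [causal_rep M hMcausal]
      simp only [Finset.sum_apply, Pi.smul_apply, smul_eq_mul]
    -- expansion of εE
    have hexp : ∀ θ' : Fin n → ℝ, εE θ' (t+1) = e (t+1) + ∑ s ∈ Finset.range (t+1),
        ((ε θ' (s+1) - e (s+1)) + ∑ j, θ' j *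
          (∑ s' ∈ Finset.range (s+1), (ε θ' (s'+1) - e (s'+1)) * M (fun u => if u = s' then 1 else 0) s j))
          * N' (fun u => if u = s then 1 else 0) t := by
      intro θ'
      rw [hεE]
      congr 1
      rw [causal_rep N' hN'causal]
      refine Finset.sum_congr rfl fun s _ => ?_
      rw [smul_eq_mul]
      congr 2
      exact Finset.sum_congr rfl fun j _ => by rw [hMrep θ' s j]
    -- derivative of εE
    have hE : HasFDerivAt (fun θ' => εE θ' (t+1))
        (∑ s ∈ Finset.range (t+1), N' (fun u => if u = s then 1 else 0) t •
          (Dε s + ∑ j, (θ j • (∑ s' ∈ Finset.range (s+1),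
              M (fun u => if u = s' then 1 else 0) s j • Dε s')
            + (∑ s' ∈ Finset.range (s+1), (ε θ (s'+1) - e (s'+1)) * M (fun u => if u = s' then 1 else 0) s j)
                • ContinuousLinearMap.proj j))) θ := by
      rw [funext hexp]
      refine HasFDerivAt.const_add _ ?_
      refine HasFDerivAt.fun_sum fun s _ => ?_
      refine HasFDerivAt.mul_const ?_ _
      refine ((hDε s).sub_const _).add ?_
      refine HasFDerivAt.fun_sum fun j _ => ?_
      exact ((ContinuousLinearMap.proj (R := ℝ) (φ := fun _ : Fin n => ℝ) j).hasFDerivAt).mul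
        (HasFDerivAt.fun_sum fun s' _ => ((hDε s').sub_const _).mul_const _)
    rw [hE.fderiv]
    -- evaluate
    have hDGapp : ∀ s : ℕ,
        (Dε s + ∑ j, (θ j • (∑ s' ∈ Finset.range (s+1),
            M (fun u => if u = s' then 1 else 0) s j • Dε s')
          + (∑ s' ∈ Finset.range (s+1), (ε θ (s'+1) - e (s'+1)) * M (fun u => if u = s' then 1 else 0) s j)
              • ContinuousLinearMap.proj j)) (Pi.single i 1)
        = -φ θ s i + M (fun s' => ε θ (s' + 1) - e (s' + 1)) s i := by
      intro s
      have hA := derivA y ψ M hMcausal ε φ hφ hrel θ Dε hDε (Pi.single i 1) s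
      have hsingle : ∀ g : Fin n → ℝ, ∑ j, (Pi.single i 1 : Fin n → ℝ) j * g j = g i := by
        intro g
        rw [Finset.sum_eq_single i]
        · simp
        · intro j _ hj; simp [Pi.single_apply, hj]
        · simp
      have hsingle' : ∀ g : Fin n → ℝ, ∑ j, g j * (Pi.single i 1 : Fin n → ℝ) j = g i := by
        intro g
        rw [Finset.sum_eq_single i]
        · simp
        · intro j _ hj; simp [Pi.single_apply, hj]
        · simp
      have hMrep' : ∀ (j : Fin n), M (fun s' => Dε s' (Pi.single i 1)) s j
          = ∑ s' ∈ Finset.range (s+1), Dε s' (Pi.single i 1) * M (fun u => if u = s' then 1 else 0) s j := by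
        intro j
        rw [causal_rep M hMcausal]
        simp only [Finset.sum_apply, Pi.smul_apply, smul_eq_mul]
      simp only [ContinuousLinearMap.add_apply, ContinuousLinearMap.sum_apply,
        ContinuousLinearMap.smul_apply, ContinuousLinearMap.proj_apply, smul_eq_mul]
      rw [Finset.sum_add_distrib]
      have e1 : ∑ j, θ j * (∑ s' ∈ Finset.range (s+1),
          M (fun u => if u = s' then 1 else 0) s j * Dε s' (Pi.single i 1))
          = ∑ j, θ j * M (fun s' => Dε s' (Pi.single i 1)) s j := by
        refine Finset.sum_congr rfl fun j _ => ?_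
        rw [hMrep' j]
        congr 1
        exact Finset.sum_congr rfl fun s' _ => mul_comm _ _
      have e2 : ∑ j, (∑ s' ∈ Finset.range (s+1),
          (ε θ (s'+1) - e (s'+1)) * M (fun u => if u = s' then 1 else 0) s j) * (Pi.single i 1 : Fin n → ℝ) j
          = M (fun s' => ε θ (s' + 1) - e (s' + 1)) s i := by
        rw [hsingle' (fun j => ∑ s' ∈ Finset.range (s+1),
          (ε θ (s'+1) - e (s'+1)) * M (fun u => if u = s' then 1 else 0) s j)]
        rw [hMrep θ s i]
      rw [e1, e2, hA, hsingle (fun j => φ θ s j)]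
      ring
    simp only [ContinuousLinearMap.sum_apply, ContinuousLinearMap.smul_apply, smul_eq_mul]
    rw [Finset.sum_congr rfl fun s _ => by rw [hDGapp s]]
    -- now sum = N' applied
    have hN'rep : N' (fun s => -φ θ s i + M (fun s' => ε θ (s' + 1) - e (s' + 1)) s i) t
        = ∑ s ∈ Finset.range (t+1),
          (-φ θ s i + M (fun s' => ε θ (s' + 1) - e (s' + 1)) s i) * N' (fun u => if u = s then 1 else 0) t := by
      rw [causal_rep N' hN'causal]
      exact Finset.sum_congr rfl fun s _ => by rw [smul_eq_mul]
    have hsplit : N' (fun s => -φ θ s i + M (fun s' => ε θ (s' + 1) - e (s' + 1)) s i) t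
        = -φf θ t i + N' (fun s => M (fun s' => ε θ (s' + 1) - e (s' + 1)) s i) t := by
      have hfe : (fun s => -φ θ s i + M (fun s' => ε θ (s' + 1) - e (s' + 1)) s i)
          = -(fun s => φ θ s i) + (fun s => M (fun s' => ε θ (s' + 1) - e (s' + 1)) s i) := rfl
      rw [hfe, map_add, map_neg, Pi.add_apply, Pi.neg_apply, hφf]
    rw [← hsplit, hN'rep]
    exact Finset.sum_congr rfl fun s _ => mul_comm _ _
  refine ⟨key, ?_⟩
  have h1 : ∀ (θ : Fin n → ℝ) (t : ℕ) (i : Fin n),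
      φE θ t i = N' ((fun s => ψ s i) + fun s => M (fun s' => e (s' + 1)) s i) t := by
    intro θ t i
    rw [hφE, key θ t i]
    have hsub : (fun s => φ θ s i) - (fun s => M (fun s' => ε θ (s' + 1) - e (s' + 1)) s i)
        = (fun s => ψ s i) + fun s => M (fun s' => e (s' + 1)) s i := by
      funext s
      have h2 : M (fun s' => ε θ (s' + 1) - e (s' + 1)) s
          = M (fun s' => ε θ (s' + 1)) s - M (fun s' => e (s' + 1)) s := by
        have h3 : (fun s' => ε θ (s' + 1) - e (s' + 1))
            = (fun s' => ε θ (s' + 1)) - (fun s' => e (s' + 1)) := rfl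
        rw [h3, map_sub, Pi.sub_apply]
      simp only [Pi.sub_apply, Pi.add_apply, h2, hφ θ s]
      ring
    rw [neg_add, neg_neg, ← sub_eq_add_neg, hφf, ← Pi.sub_apply _ _ t]
    rw [show (fun t => N' (fun s => φ θ s i) t) - (fun t => N' (fun s => M (fun s' => ε θ (s' + 1) - e (s' + 1)) s i) t)
      = N' (fun s => φ θ s i) - N' (fun s => M (fun s' => ε θ (s' + 1) - e (s' + 1)) s i) from rfl]
    rw [← map_sub, hsub]
  intro θ₁ θ₂ t i
  rw [h1 θ₁, h1 θ₂]
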